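/- Let β, v, w, ρ, γ, μ, N₀ be real numbers with N₀ ≠ 0, and let S*, A* be real numbers. The characteristic polynomial of the 5×5 real matrix J(S*, A*) equals (X + (ρ+γ+μ))·(X + μ)²·(X² + (v + w + 2μ + (β/N₀)(A* − S*))·X + ((v+μ)(w+μ − (β/N₀)S*) + (β/N₀)A*(w+μ))). -/

import Mathlib

open Polynomial

set_option maxHeartbeats 1000000 in
lemma det_sparse5 {R : Type*} [CommRing R] (a b c d e f g h i j : R) :
    Matrix.det !![a, b, 0, 0, 0; c, d, 0, 0, 0; 0, e, f, 0, 0; g, 0, h, i, 0; 0, 0, 0, 0, j]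
      = (a * d - b * c) * f * i * j := by
  simp [Matrix.det_succ_row_zero, Fin.sum_univ_succ, Fin.succAbove]
  ring

set_option maxHeartbeats 1000000 in
/-- The characteristic polynomial of the Jacobian `J(S*, A*)` of the reduced SAIVRD
system at a general equilibrium factors as
`(X + (ρ+γ+μ))(X + μ)²(X² + (v + w + 2μ + (β/N₀)(A* − S*))X + ((v+μ)(w+μ − (β/N₀)S*) + (β/N₀)A*(w+μ)))`. -/
theorem charpoly_jacobian_general
    (β v w ρ γ μ N₀ : ℝ) (hN₀ : N₀ ≠ 0) (Sstar Astar : ℝ) :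
    let J : Matrix (Fin 5) (Fin 5) ℝ :=
      !![-(v + (β / N₀) * Astar + μ), -((β / N₀) * Sstar), 0, 0, 0;
         (β / N₀) * Astar, (β / N₀) * Sstar - (w + μ), 0, 0, 0;
         0, w, -(ρ + γ + μ), 0, 0;
         v, 0, γ, -μ, 0;
         0, 0, 0, 0, -μ]
    J.charpoly =
      (X + C (ρ + γ + μ)) * (X + C μ) ^ 2 *
        (X ^ 2 + C (v + w + 2 * μ + (β / N₀) * (Astar - Sstar)) * X +
          C ((v + μ) * (w + μ - (β / N₀) * Sstar) + (β / N₀) * Astar * (w + μ))) := by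
  intro J
  have h : J.charmatrix =
      !![X + C (v + (β / N₀) * Astar + μ), C ((β / N₀) * Sstar), 0, 0, 0;
         -C ((β / N₀) * Astar), X - C ((β / N₀) * Sstar - (w + μ)), 0, 0, 0;
         0, -C w, X + C (ρ + γ + μ), 0, 0;
         -C v, 0, -C γ, X + C μ, 0;
         0, 0, 0, 0, X + C μ] := by
    ext i j
    fin_cases i <;> fin_cases j <;>
      simp [Matrix.charmatrix_apply_eq, Matrix.charmatrix_apply_ne, J, sub_eq_add_neg,
        Matrix.vecHead, Matrix.vecTail]
  rw [Matrix.charpoly, h, det_sparse5]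
  simp only [C_add, C_mul, C_sub, C_neg, map_ofNat]
  ring
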